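/- For A_t = [[t, -1],[1, -t]] with 0 < t < 1, one has F(A_t) = t⁴/(t⁴ + 2t²), hence F(A_t) → 0 as t → 0. -/

import Mathlib

open Matrix

/-- Symmetric part `S(A) = (A + Aᵀ)/2`. -/
noncomputable def Ssym {m : ℕ} (A : Matrix (Fin m) (Fin m) ℝ) : Matrix (Fin m) (Fin m) ℝ :=
  (1 / 2 : ℝ) • (A + Aᵀ)

/-- Commutator of matrices. -/
def brk {m : ℕ} (X Y : Matrix (Fin m) (Fin m) ℝ) : Matrix (Fin m) (Fin m) ℝ :=
  X * Y - Y * X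

/-- Squared norm `|X|² = tr (X Xᵀ)`. -/
noncomputable def nsq {m : ℕ} (X : Matrix (Fin m) (Fin m) ℝ) : ℝ :=
  (X * Xᵀ).trace

/-- The Ricci pinching functional of the almost-abelian solvmanifold attached to `A`:
`F(A) = (tr S(A)² + (tr A)²)² / (tr S(A)² (tr S(A)² + (tr A)²) + ¼|[A,Aᵀ]|²)`. -/
noncomputable def Fpinch {m : ℕ} (A : Matrix (Fin m) (Fin m) ℝ) : ℝ :=
  ((Ssym A * Ssym A).trace + A.trace ^ 2) ^ 2 /
    ((Ssym A * Ssym A).trace * ((Ssym A * Ssym A).trace + A.trace ^ 2)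
      + (1 / 4) * nsq (brk A Aᵀ))

lemma key (t : ℝ) : Fpinch !![t, -1; 1, -t] = t ^ 4 / (t ^ 4 + 2 * t ^ 2) := by
  have hT : (!![t, -1; 1, -t])ᵀ = !![t, 1; -1, -t] := by
    ext i j; fin_cases i <;> fin_cases j <;> simp [Matrix.transpose_apply]
  have hS : Ssym !![t, -1; 1, -t] = !![t, 0; 0, -t] := by
    rw [Ssym, hT]
    ext i j; fin_cases i <;> fin_cases j <;> simp <;> ring
  have hSS : (Ssym !![t, -1; 1, -t] * Ssym !![t, -1; 1, -t]).trace = 2 * t ^ 2 := by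
    rw [hS, Matrix.mul_fin_two, Matrix.trace_fin_two]; simp; ring
  have htr : (!![t, -1; 1, -t]).trace = 0 := by
    rw [Matrix.trace_fin_two]; simp
  have hbrk : brk !![t, -1; 1, -t] (!![t, -1; 1, -t])ᵀ = !![0, 4*t; 4*t, 0] := by
    rw [brk, hT, Matrix.mul_fin_two, Matrix.mul_fin_two]
    ext i j; fin_cases i <;> fin_cases j <;> simp <;> ring
  have hn : nsq (brk !![t, -1; 1, -t] (!![t, -1; 1, -t])ᵀ) = 32 * t ^ 2 := by
    rw [nsq, hbrk]
    have : (!![0, 4*t; 4*t, 0])ᵀ = !![0, 4*t; 4*t, 0] := by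
      ext i j; fin_cases i <;> fin_cases j <;> simp
    rw [this, Matrix.mul_fin_two, Matrix.trace_fin_two]; simp; ring
  rw [Fpinch, hSS, htr, hn]
  rcases eq_or_ne t 0 with rfl | ht
  · norm_num
  · rw [show 2 * t ^ 2 * (2 * t ^ 2 + 0 ^ 2) + 1 / 4 * (32 * t ^ 2)
        = 4 * (t ^ 4 + 2 * t ^ 2) by ring,
      show (2 * t ^ 2 + 0 ^ 2) ^ 2 = 4 * t ^ 4 by ring, mul_div_mul_left]
    norm_num

/-- For `A_t = [[t, -1], [1, -t]]` with `0 < t < 1`,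
`F(A_t) = t⁴/(t⁴ + 2t²)`, hence `F(A_t) → 0` as `t → 0⁺`. -/
theorem stmt_6 :
    (∀ t : ℝ, 0 < t → t < 1 → Fpinch !![t, -1; 1, -t] = t ^ 4 / (t ^ 4 + 2 * t ^ 2)) ∧
    Filter.Tendsto (fun t : ℝ => Fpinch !![t, -1; 1, -t])
      (nhdsWithin 0 (Set.Ioo 0 1)) (nhds 0) := by
  constructor
  · exact fun t _ _ => key t
  · have h1 : Filter.Tendsto (fun t : ℝ => t ^ 2 / (t ^ 2 + 2))
        (nhdsWithin 0 (Set.Ioo 0 1)) (nhds 0) := by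
      have : Filter.Tendsto (fun t : ℝ => t ^ 2 / (t ^ 2 + 2)) (nhds 0) (nhds 0) := by
        have := (continuous_pow 2 (M := ℝ)).div
          (by continuity : Continuous fun t : ℝ => t ^ 2 + 2)
          (fun x => by positivity)
        simpa [Pi.div_def] using this.tendsto 0
      exact this.mono_left nhdsWithin_le_nhds
    refine h1.congr' ?_
    filter_upwards [self_mem_nhdsWithin] with t ht
    rw [key t]
    have ht0 : t ≠ 0 := ne_of_gt ht.1
    field_simp
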